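/- Let M ≥ 2 be even. Let T : ℕ → ℝ → ℝ be positive functions satisfying the T-system, duality, periodicity T_j(x+2M+2) = T_j(x), and the generalized T-system identities. Define ψ(x) = arcsin(1/√(T_M(x)T_M(x+2))). Then cos(ψ(x) + ψ(x+2) + ⋯ + ψ(x + 2(M−1))) = 1 / √(T_M(x)·T_M(x + 2M)). -/

import Mathlib

open Real

theorem final_lemma_even (M : ℕ) (hM : 2 ≤ M) (hMeven : Even M) (T : ℕ → ℝ → ℝ)
    (hpos : ∀ j, j ≤ 2*M → ∀ x, 0 < T j x)
    (h0 : ∀ x, T 0 x = 1)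
    (htop : ∀ x, T (2*M+1) x = 0)
    (hsys : ∀ j, 1 ≤ j → j ≤ 2*M-1 → ∀ x : ℝ,
      T j (x+1) * T j (x-1) = 1 + T (j+1) x * T (j-1) x)
    (hdual : ∀ j, 1 ≤ j → j ≤ M → ∀ x : ℝ, T (M-j) x = T (M+j) x)
    (hper : ∀ j, ∀ x : ℝ, T j (x + (2*(M:ℝ)+2)) = T j x)
    (hgen : ∀ α β p : ℕ, 1 ≤ p → p ≤ α → p ≤ β → ∀ x : ℝ,
      T α x * T β (x + ((α:ℝ)+(β:ℝ)-2*(p:ℝ)+2)) =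
        T (α-p) (x-(p:ℝ)) * T (β-p) (x+((α:ℝ)+(β:ℝ)-(p:ℝ)+2)) +
        T (p-1) (x+((α:ℝ)-(p:ℝ)+1)) * T (α+β-p+1) (x+((β:ℝ)-(p:ℝ)+1)))
    (ψ : ℝ → ℝ)
    (hψ : ∀ x, ψ x = Real.arcsin (1 / Real.sqrt (T M x * T M (x+2)))) :
    ∀ x : ℝ, Real.cos (∑ k ∈ Finset.range M, ψ (x + 2*k)) =
      1 / Real.sqrt (T M x * T M (x + 2*(M:ℝ))) := by
  intro x
  have hM1 : (1:ℕ) ≤ M := by omega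
  have hposM : ∀ y : ℝ, 0 < T M y := hpos M (by omega)
  have hposM1 : ∀ y : ℝ, 0 < T (M-1) y := hpos (M-1) (by omega)
  -- Lemma A : T_M(y) T_M(y+2) = 1 + T_{M-1}(y+1)^2
  have hA : ∀ y : ℝ, T M y * T M (y+2) = 1 + T (M-1) (y+1) * T (M-1) (y+1) := by
    intro y
    have h := hsys M hM1 (by omega) (y+1)
    have hd := hdual 1 le_rfl hM1 (y+1)
    rw [show y+1+1 = y+2 by ring, show y+1-1 = y by ring] at h
    rw [← hd] at h
    linear_combination h
  have hP1 : ∀ y : ℝ, 1 ≤ T M y * T M (y+2) := by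
    intro y
    nlinarith [hA y, mul_self_nonneg (T (M-1) (y+1))]
  have hPpos : ∀ y : ℝ, 0 < T M y * T M (y+2) := fun y =>
    mul_pos (hposM y) (hposM (y+2))
  have hsq1 : ∀ y : ℝ, 1 ≤ Real.sqrt (T M y * T M (y+2)) := by
    intro y
    rw [show (1:ℝ) = Real.sqrt 1 by simp]
    exact Real.sqrt_le_sqrt (hP1 y)
  have hsinψ : ∀ y : ℝ, Real.sin (ψ y) * Real.sqrt (T M y * T M (y+2)) = 1 := by
    intro y
    have h1 := hsq1 y
    have hs : 0 < Real.sqrt (T M y * T M (y+2)) := by linarith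
    have hnn : (0:ℝ) ≤ 1 / Real.sqrt (T M y * T M (y+2)) := by positivity
    rw [hψ y, Real.sin_arcsin (by linarith) (by rw [div_le_one hs]; linarith)]
    field_simp
  have hcosψ : ∀ y : ℝ, Real.cos (ψ y) * Real.sqrt (T M y * T M (y+2))
      = T (M-1) (y+1) := by
    intro y
    have hP : 0 < T M y * T M (y+2) := hPpos y
    have h1 : 1 ≤ T M y * T M (y+2) := hP1 y
    have hs : 0 < Real.sqrt (T M y * T M (y+2)) := Real.sqrt_pos.mpr hP
    rw [hψ y, Real.cos_arcsin]
    rw [show 1 - (1 / Real.sqrt (T M y * T M (y+2)))^2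
        = (T M y * T M (y+2) - 1) / (T M y * T M (y+2)) by
      rw [div_pow, one_pow, Real.sq_sqrt hP.le]; field_simp; rw [sub_div, div_self hP.ne']]
    rw [← Real.sqrt_mul (div_nonneg (by linarith) hP.le) (T M y * T M (y+2))]
    rw [show (T M y * T M (y+2) - 1) / (T M y * T M (y+2)) * (T M y * T M (y+2))
        = T M y * T M (y+2) - 1 by field_simp; exact mul_div_cancel_left₀ _ hP.ne']
    rw [show T M y * T M (y+2) - 1 = T (M-1) (y+1) * T (M-1) (y+1) by
      linear_combination hA y]
    exact Real.sqrt_mul_self (hposM1 (y+1)).le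
  -- First generalized identity
  have hstar : ∀ n : ℕ, 1 ≤ n → n ≤ M - 1 →
      T (M-n) (x + n) * T (M-1) (x + 2*n + 1)
        = T (n-1) (x + M + n + 1) + T (M-n-1) (x + n + 1) * T M (x + 2*n) := by
    intro n hn1 hnM
    have hnM' : n ≤ M := by omega
    have H := hgen (M-n) (M-1) (M-n) (by omega) le_rfl (by omega) (x + n)
    rw [show M-n-(M-n) = 0 by omega, show M-1-(M-n) = n-1 by omega,
        show M-n+(M-1)-(M-n)+1 = M by omega] at H
    rw [h0] at H
    push_cast [Nat.cast_sub hnM', Nat.cast_sub hM1] at H ⊢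
    ring_nf at H ⊢
    linarith [H]
  -- Second generalized identity (uses duality and periodicity)
  have hstar2 : ∀ n : ℕ, 1 ≤ n → n ≤ M - 1 →
      T n (x + M + n + 2) * T M (x + 2*n)
        = T (n-1) (x + M + n + 1) * T (M-1) (x + 2*n + 1) + T (M-n) (x + n) := by
    intro n hn1 hnM
    have hnM' : n ≤ M := by omega
    have H := hgen n M 1 le_rfl hn1 hM1 (x + M + n + 2)
    rw [show (1:ℕ)-1 = 0 from rfl, show n+M-1+1 = M+n by omega] at H
    rw [h0] at H
    have hd := hdual n hn1 hnM'
    rw [← hd] at H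
    have hp1 := hper M (x + 2*(n:ℝ))
    have hp2 := hper (M-1) (x + 2*(n:ℝ) + 1)
    have hp3 := hper (M-n) (x + (n:ℝ))
    push_cast at H hp1 hp2 hp3 ⊢
    ring_nf at H hp1 hp2 hp3 ⊢
    rw [hp1, hp2, hp3] at H
    linarith [H]
  -- Main induction
  have key : ∀ n : ℕ, 1 ≤ n → n ≤ M →
      Real.cos (∑ k ∈ Finset.range n, ψ (x + 2*k))
          * Real.sqrt (T M x * T M (x + 2*(n:ℝ))) = T (M-n) (x + n)
      ∧ Real.sin (∑ k ∈ Finset.range n, ψ (x + 2*k))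
          * Real.sqrt (T M x * T M (x + 2*(n:ℝ))) = T (n-1) (x + M + n + 1) := by
    intro n
    induction n with
    | zero => intro h; omega
    | succ m ih =>
      intro _ hm1
      by_cases hm : m = 0
      · subst hm
        constructor
        · simpa using hcosψ x
        · simpa [h0] using hsinψ x
      · obtain ⟨hc, hs⟩ := ih (by omega) (by omega)
        have h1 := hstar m (by omega) (by omega)
        have h2 := hstar2 m (by omega) (by omega)
        have hC := hcosψ (x + 2*(m:ℝ))
        have hS := hsinψ (x + 2*(m:ℝ))
        have hTpos : (0:ℝ) < T M (x + 2*(m:ℝ)) := hposM _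
        have hde : Real.sqrt (T M x * T M (x + 2*(m:ℝ)))
              * Real.sqrt (T M (x + 2*(m:ℝ)) * T M (x + 2*(m:ℝ) + 2))
            = T M (x + 2*(m:ℝ)) * Real.sqrt (T M x * T M (x + 2*(m:ℝ) + 2)) := by
          rw [Real.sqrt_mul (hposM x).le, Real.sqrt_mul (hposM _).le,
              Real.sqrt_mul (hposM x).le]
          have h3 : Real.sqrt (T M (x + 2*(m:ℝ))) * Real.sqrt (T M (x + 2*(m:ℝ)))
              = T M (x + 2*(m:ℝ)) := Real.mul_self_sqrt (hposM _).le
          linear_combination (Real.sqrt (T M x) * Real.sqrt (T M (x + 2*(m:ℝ) + 2))) * h3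
        rw [show ((m+1 : ℕ):ℝ) = (m:ℝ)+1 by push_cast; ring,
            show x + 2*((m:ℝ)+1) = x + 2*(m:ℝ) + 2 by ring,
            show x + ((m:ℝ)+1) = x + (m:ℝ) + 1 by ring,
            show x + (M:ℝ) + ((m:ℝ)+1) + 1 = x + (M:ℝ) + (m:ℝ) + 2 by ring,
            show M-(m+1) = M-m-1 by omega, show (m+1)-1 = m from rfl,
            Finset.sum_range_succ, Real.cos_add, Real.sin_add]
        constructor
        · refine mul_right_cancel₀ (ne_of_gt hTpos) ?_
          linear_combination
            (Real.cos (ψ (x + 2*(m:ℝ)))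
              * Real.sqrt (T M (x + 2*(m:ℝ)) * T M (x + 2*(m:ℝ) + 2))) * hc
            - (Real.sin (ψ (x + 2*(m:ℝ)))
              * Real.sqrt (T M (x + 2*(m:ℝ)) * T M (x + 2*(m:ℝ) + 2))) * hs
            + T (M-m) (x + (m:ℝ)) * hC
            - T (m-1) (x + (M:ℝ) + (m:ℝ) + 1) * hS
            - (Real.cos (∑ k ∈ Finset.range m, ψ (x + 2*k))
                * Real.cos (ψ (x + 2*(m:ℝ)))
              - Real.sin (∑ k ∈ Finset.range m, ψ (x + 2*k))
                * Real.sin (ψ (x + 2*(m:ℝ)))) * hde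
            + h1
        · refine mul_right_cancel₀ (ne_of_gt hTpos) ?_
          linear_combination
            (Real.cos (ψ (x + 2*(m:ℝ)))
              * Real.sqrt (T M (x + 2*(m:ℝ)) * T M (x + 2*(m:ℝ) + 2))) * hs
            + (Real.sin (ψ (x + 2*(m:ℝ)))
              * Real.sqrt (T M (x + 2*(m:ℝ)) * T M (x + 2*(m:ℝ) + 2))) * hc
            + T (m-1) (x + (M:ℝ) + (m:ℝ) + 1) * hC
            + T (M-m) (x + (m:ℝ)) * hS
            - (Real.sin (∑ k ∈ Finset.range m, ψ (x + 2*k))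
                * Real.cos (ψ (x + 2*(m:ℝ)))
              + Real.cos (∑ k ∈ Finset.range m, ψ (x + 2*k))
                * Real.sin (ψ (x + 2*(m:ℝ)))) * hde
            - h2
  obtain ⟨hc, -⟩ := key M hM1 le_rfl
  rw [Nat.sub_self, h0] at hc
  have hd : 0 < Real.sqrt (T M x * T M (x + 2*(M:ℝ))) :=
    Real.sqrt_pos.mpr (mul_pos (hposM x) (hposM _))
  rw [eq_div_iff (ne_of_gt hd)]
  exact hc
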